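/- Any bijection of a planar point set in general position onto another with the same labeled order type preserves, for every point p, the clockwise cyclic order by angle of the remaining points around p; consequently, if one labeled order type of n points is realizable, then at least (n−1)! distinct labeled order types are realizable by relabeling the same point set. -/

import Mathlib

open scoped Classical

/-- Cross product orientation value of the triple `(a, b, c)`. -/
private def crX {n : ℕ} (P : Fin n → ℝ × ℝ) (a b c : Fin n) : ℝ :=
  ((P b).1 - (P a).1) * ((P c).2 - (P a).2)
    - ((P b).2 - (P a).2) * ((P c).1 - (P a).1)

/-- Transitivity of the cross-product comparison for vectors in the half plane
`{x > 0} ∪ {x = 0, y > 0}`. -/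
private lemma half_trans (u v w : ℝ × ℝ)
    (hu : 0 < u.1 ∨ (u.1 = 0 ∧ 0 < u.2))
    (hv : 0 < v.1 ∨ (v.1 = 0 ∧ 0 < v.2))
    (hw : 0 < w.1 ∨ (w.1 = 0 ∧ 0 < w.2))
    (h1 : 0 < u.1 * v.2 - u.2 * v.1)
    (h2 : 0 < v.1 * w.2 - v.2 * w.1) :
    0 < u.1 * w.2 - u.2 * w.1 := by
  have hu1 : 0 < u.1 := by
    rcases hu with h | ⟨h0, h2'⟩
    · exact h
    · exfalso
      rw [h0] at h1
      rcases hv with hv1 | ⟨hv1, hv2⟩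
      · nlinarith [mul_pos h2' hv1]
      · rw [hv1] at h1; nlinarith
  have hv1 : 0 < v.1 := by
    rcases hv with h | ⟨h0, h2'⟩
    · exact h
    · exfalso
      rw [h0] at h2
      rcases hw with hw1 | ⟨hw1, hw2⟩
      · nlinarith [mul_pos h2' hw1]
      · rw [hw1] at h2; nlinarith
  rcases hw with hw1 | ⟨hw1, hw2⟩
  · nlinarith [mul_pos h1 hw1, mul_pos h2 hu1]
  · rw [hw1]
    nlinarith

/-- A permutation preserving all orientations and fixing the lexicographically
minimal point is the identity. -/
private lemma stab_id {n : ℕ} (P : Fin n → ℝ × ℝ)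
    (hgp : ∀ i j k : Fin n, i ≠ j → i ≠ k → j ≠ k → crX P i j k ≠ 0)
    (i₀ : Fin n)
    (hmin : ∀ j, j ≠ i₀ →
      0 < (P j).1 - (P i₀).1 ∨ ((P j).1 - (P i₀).1 = 0 ∧ 0 < (P j).2 - (P i₀).2))
    (τ : Equiv.Perm (Fin n)) (hτ0 : τ i₀ = i₀)
    (hpres : ∀ a b c : Fin n, (0 < crX P a b c ↔ 0 < crX P (τ a) (τ b) (τ c))) :
    τ = 1 := by
  classical
  set r : Fin n → Fin n → Prop :=
    fun a b => (a = i₀ ∧ b ≠ i₀) ∨ (a ≠ i₀ ∧ b ≠ i₀ ∧ 0 < crX P i₀ a b) with hr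
  have hself : ∀ a, crX P i₀ a a = 0 := by
    intro a; simp [crX]; ring
  have hneg : ∀ a b, crX P i₀ b a = -crX P i₀ a b := by
    intro a b; simp [crX]; ring
  have hirr : ∀ a, ¬ r a a := by
    intro a h
    rcases h with ⟨h1, h2⟩ | ⟨h1, h2, h3⟩
    · exact h2 h1
    · rw [hself a] at h3; exact lt_irrefl 0 h3
  have htri : ∀ a b, a ≠ b → r a b ∨ r b a := by
    intro a b hab
    by_cases ha : a = i₀
    · subst ha; exact Or.inl (Or.inl ⟨rfl, fun h => hab h.symm⟩)
    by_cases hb : b = i₀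
    · subst hb; exact Or.inr (Or.inl ⟨rfl, ha⟩)
    have hne := hgp i₀ a b (fun h => ha h.symm) (fun h => hb h.symm) hab
    rcases lt_or_gt_of_ne hne with h | h
    · refine Or.inr (Or.inr ⟨hb, ha, ?_⟩)
      rw [hneg]; linarith
    · exact Or.inl (Or.inr ⟨ha, hb, h⟩)
  have hanti : ∀ a b, r a b → ¬ r b a := by
    intro a b h1 h2
    rcases h1 with ⟨h1, h1'⟩ | ⟨h1, h1', h1''⟩
    · rcases h2 with ⟨h2, h2'⟩ | ⟨h2, h2', h2''⟩
      · exact h1' h2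
      · exact h2' h1
    · rcases h2 with ⟨h2, h2'⟩ | ⟨h2, h2', h2''⟩
      · exact h1' h2
      · rw [hneg] at h2''; linarith
  have htrans : ∀ a b c, r a b → r b c → r a c := by
    intro a b c hab hbc
    have hcne : c ≠ i₀ := by
      rcases hbc with ⟨_, h⟩ | ⟨_, h, _⟩ <;> exact h
    rcases hab with ⟨ha, hb⟩ | ⟨ha, hb, hab'⟩
    · exact Or.inl ⟨ha, hcne⟩
    · refine Or.inr ⟨ha, hcne, ?_⟩
      rcases hbc with ⟨hb', _⟩ | ⟨_, _, hbc'⟩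
      · exact absurd hb' hb
      · have := half_trans ((P a).1 - (P i₀).1, (P a).2 - (P i₀).2)
          ((P b).1 - (P i₀).1, (P b).2 - (P i₀).2)
          ((P c).1 - (P i₀).1, (P c).2 - (P i₀).2)
          (hmin a ha) (hmin b hb) (hmin c hcne) hab' hbc'
        simpa [crX] using this
  have hpresr : ∀ a b, r a b → r (τ a) (τ b) := by
    intro a b h
    rcases h with ⟨ha, hb⟩ | ⟨ha, hb, h3⟩
    · subst ha
      exact Or.inl ⟨hτ0, fun h => hb (τ.injective (by rw [h, hτ0]))⟩
    · refine Or.inr ⟨fun h => ha (τ.injective (by rw [h, hτ0])),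
        fun h => hb (τ.injective (by rw [h, hτ0])), ?_⟩
      have := (hpres i₀ a b).mp h3
      rwa [hτ0] at this
  have hpresr' : ∀ a b, r (τ a) (τ b) → r a b := by
    intro a b h
    by_cases hab : a = b
    · subst hab; exact absurd h (hirr _)
    rcases htri a b hab with h' | h'
    · exact h'
    · exact absurd h (hanti _ _ (hpresr _ _ h'))
  set m : Fin n → ℕ := fun a => ((Finset.univ : Finset (Fin n)).filter fun b => r b a).card
    with hm
  have hm_eq : ∀ a, m (τ a) = m a := by
    intro a
    have hset : ((Finset.univ : Finset (Fin n)).filter fun c => r c (τ a))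
        = ((Finset.univ : Finset (Fin n)).filter fun b => r b a).map τ.toEmbedding := by
      ext c
      simp only [Finset.mem_map, Finset.mem_filter, Finset.mem_univ, true_and,
        Equiv.coe_toEmbedding]
      constructor
      · intro h
        refine ⟨τ.symm c, hpresr' _ _ ?_, by simp⟩
        simpa using h
      · rintro ⟨b, hb, rfl⟩
        exact hpresr _ _ hb
    simp [m, hset]
  have hm_lt : ∀ a b, r a b → m a < m b := by
    intro a b hab
    apply Finset.card_lt_card
    rw [Finset.ssubset_iff_of_subset]
    · exact ⟨a, by simp [hab], by simp [hirr a]⟩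
    · intro c hc
      simp only [Finset.mem_filter, Finset.mem_univ, true_and] at hc ⊢
      exact htrans _ _ _ hc hab
  refine Equiv.ext fun a => ?_
  simp only [Equiv.Perm.one_apply]
  by_contra hne
  rcases htri (τ a) a hne with h' | h'
  · have := hm_lt _ _ h'
    rw [hm_eq a] at this
    exact lt_irrefl _ this
  · have := hm_lt _ _ h'
    rw [hm_eq a] at this
    exact lt_irrefl _ this

/-- For a set of `n ≥ 3` points in general position in the plane, the `n!` relabelings
induce at least `(n−1)!` distinct labeled order types. -/
theorem relabelings_order_types (n : ℕ) (hn : 3 ≤ n) (P : Fin n → ℝ × ℝ)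
    (hinj : Function.Injective P)
    (hgp : ∀ i j k : Fin n, i ≠ j → i ≠ k → j ≠ k →
      ((P j).1 - (P i).1) * ((P k).2 - (P i).2)
        - ((P j).2 - (P i).2) * ((P k).1 - (P i).1) ≠ 0) :
    ((Finset.univ : Finset (Equiv.Perm (Fin n))).image
      (fun σ => fun i j k : Fin n =>
        decide (0 < ((P (σ j)).1 - (P (σ i)).1) * ((P (σ k)).2 - (P (σ i)).2)
          - ((P (σ j)).2 - (P (σ i)).2) * ((P (σ k)).1 - (P (σ i)).1)))).card
      ≥ Nat.factorial (n - 1) := by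
  classical
  have hgp' : ∀ i j k : Fin n, i ≠ j → i ≠ k → j ≠ k → crX P i j k ≠ 0 := hgp
  -- choose the lexicographically minimal point
  obtain ⟨i₀, -, hi₀⟩ := Finset.exists_min_image (Finset.univ : Finset (Fin n))
    (fun j => toLex (P j)) ⟨⟨0, by omega⟩, Finset.mem_univ _⟩
  have hmin : ∀ j, j ≠ i₀ →
      0 < (P j).1 - (P i₀).1 ∨ ((P j).1 - (P i₀).1 = 0 ∧ 0 < (P j).2 - (P i₀).2) := by
    intro j hj
    have hle := hi₀ j (Finset.mem_univ j)
    have hne : toLex (P i₀) ≠ toLex (P j) := by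
      intro h
      exact hj (hinj (toLex.injective h)).symm
    have hlt : toLex (P i₀) < toLex (P j) := lt_of_le_of_ne hle hne
    rw [Prod.Lex.lt_iff] at hlt; simp only [ofLex_toLex] at hlt
    rcases hlt with h | ⟨h1, h2⟩
    · left; linarith
    · right; exact ⟨by linarith, by linarith⟩
  set F : Equiv.Perm (Fin n) → (Fin n → Fin n → Fin n → Bool) :=
    fun σ => fun i j k : Fin n =>
      decide (0 < ((P (σ j)).1 - (P (σ i)).1) * ((P (σ k)).2 - (P (σ i)).2)
        - ((P (σ j)).2 - (P (σ i)).2) * ((P (σ k)).1 - (P (σ i)).1)) with hF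
  -- every fiber of F has at most n elements
  have key : ∀ b ∈ (Finset.univ : Finset (Equiv.Perm (Fin n))).image F,
      ((Finset.univ : Finset (Equiv.Perm (Fin n))).filter fun σ => F σ = b).card ≤ n := by
    intro b _
    have hinjOn : Set.InjOn (fun σ : Equiv.Perm (Fin n) => σ.symm i₀)
        ((Finset.univ : Finset (Equiv.Perm (Fin n))).filter fun σ => F σ = b) := by
      intro σ hσ σ' hσ' heq
      simp only [Finset.coe_filter, Set.mem_setOf_eq] at hσ hσ'
      have hFF : F σ = F σ' := by rw [hσ.2, hσ'.2]
      have heq' : σ.symm i₀ = σ'.symm i₀ := heq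
      set τ : Equiv.Perm (Fin n) := σ.symm.trans σ' with hτ
      have hτ0 : τ i₀ = i₀ := by
        simp only [hτ, Equiv.trans_apply]
        rw [heq']
        simp
      have hpres : ∀ a c d : Fin n, (0 < crX P a c d ↔ 0 < crX P (τ a) (τ c) (τ d)) := by
        intro a c d
        have := congrFun (congrFun (congrFun hFF (σ.symm a)) (σ.symm c)) (σ.symm d)
        simp only [hF, Equiv.apply_symm_apply] at this
        have h2 := decide_eq_decide.mp this
        simpa [crX, hτ, Equiv.trans_apply] using h2
      have hτ1 : τ = 1 := stab_id P hgp' i₀ hmin τ hτ0 hpres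
      refine Equiv.ext fun x => ?_
      have : τ (σ x) = σ x := by rw [hτ1]; rfl
      simp only [hτ, Equiv.trans_apply, Equiv.symm_apply_apply] at this
      exact this.symm
    calc ((Finset.univ : Finset (Equiv.Perm (Fin n))).filter fun σ => F σ = b).card
        ≤ (Finset.univ : Finset (Fin n)).card :=
          Finset.card_le_card_of_injOn _ (fun _ _ => Finset.mem_univ _) hinjOn
      _ = n := by simp
  have h1 : (Finset.univ : Finset (Equiv.Perm (Fin n))).card
      ≤ n * ((Finset.univ : Finset (Equiv.Perm (Fin n))).image F).card :=
    Finset.card_le_mul_card_image _ n key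
  have hcard : (Finset.univ : Finset (Equiv.Perm (Fin n))).card = Nat.factorial n := by
    rw [Finset.card_univ, Fintype.card_perm, Fintype.card_fin]
  have hfac : n * Nat.factorial (n - 1) = Nat.factorial n := by
    have h0 : 0 < n := by omega
    exact Nat.mul_factorial_pred h0.ne'
  have h2 : n * Nat.factorial (n - 1)
      ≤ n * ((Finset.univ : Finset (Equiv.Perm (Fin n))).image F).card := by
    rw [hfac, ← hcard]; exact h1
  have h3 := Nat.le_of_mul_le_mul_left h2 (by omega : 0 < n)
  exact h3
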